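/- Let s ∈ {−1, 1}, l > 0, κ > 0, ρ₀ > 0 with 1 + s·κ·l²·ρ₀/12 > 0, set β = √(1 + s·κ·l²·ρ₀/12), and define u(r) = 1 + s·(r²/l²)·(1 − β). Let C ∈ ℝ, C₀ ∈ ℝ, and C₁ = −s·κ·l²·C / (12·β·(1 − β)). Suppose (a, b) ⊆ (0, ∞) is an interval on which u(r) > 0 and C₁ + C₀·√(u(r)) > 0, and define F(r) = ln(C₁ + C₀·√(u(r))) and g(r) = −(1/2)·ln u(r). Then for all r ∈ (a, b): (u(r)/r³)·(F′(r) + g′(r))·(r² + s·l²·(1 − u(r))) = (κ/12)·C·e^{−F(r)}. -/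

import Mathlib

open Real

/-- Verification that `e^{f} = C₁ + C₀·e^{−g}` (equation (se30)), with `C₁`
given by (se31), solves the summed field equation (se24) for the
constant-density interior solution with `ρ₀ + p = C·e^{−f}`. -/
theorem stmt_7 (s l κ ρ₀ : ℝ) (hs : s = 1 ∨ s = -1) (hl : 0 < l)
    (hκ : 0 < κ) (hρ₀ : 0 < ρ₀) (hpos : 0 < 1 + s * κ * l ^ 2 * ρ₀ / 12)
    (β : ℝ) (hβ : β = Real.sqrt (1 + s * κ * l ^ 2 * ρ₀ / 12))
    (u : ℝ → ℝ) (hu : ∀ r : ℝ, u r = 1 + s * (r ^ 2 / l ^ 2) * (1 - β))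
    (C C₀ C₁ : ℝ) (hC₁ : C₁ = -s * κ * l ^ 2 * C / (12 * β * (1 - β)))
    (a b : ℝ) (hab : Set.Ioo a b ⊆ Set.Ioi (0 : ℝ))
    (hupos : ∀ r ∈ Set.Ioo a b, 0 < u r)
    (hepos : ∀ r ∈ Set.Ioo a b, 0 < C₁ + C₀ * Real.sqrt (u r))
    (F g : ℝ → ℝ)
    (hF : ∀ r : ℝ, F r = Real.log (C₁ + C₀ * Real.sqrt (u r)))
    (hg : ∀ r : ℝ, g r = -(1 / 2) * Real.log (u r)) :
    ∀ r ∈ Set.Ioo a b,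
      (u r / r ^ 3) * (deriv F r + deriv g r) * (r ^ 2 + s * l ^ 2 * (1 - u r)) =
        (κ / 12) * C * Real.exp (-F r) := by
  intro r hr
  have hr0 : 0 < r := hab hr
  have hβ0 : 0 < β := hβ ▸ Real.sqrt_pos.mpr hpos
  have hβsq : β ^ 2 = 1 + s * κ * l ^ 2 * ρ₀ / 12 := by
    rw [hβ]; exact Real.sq_sqrt hpos.le
  have hs2 : s ^ 2 = 1 := by rcases hs with h | h <;> rw [h] <;> norm_num
  have hsne : s ≠ 0 := by rcases hs with h | h <;> rw [h] <;> norm_num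
  have hlne : l ≠ 0 := hl.ne'
  have hβne1 : (1 : ℝ) - β ≠ 0 := by
    intro h
    have hβ1 : β = 1 := by linarith
    have : s * κ * l ^ 2 * ρ₀ / 12 = 0 := by
      have := hβsq; rw [hβ1] at this; linarith
    rcases hs with h' | h' <;> rw [h'] at this <;>
      nlinarith [mul_pos (mul_pos hκ (pow_pos hl 2)) hρ₀]
  have hU : 0 < u r := hupos r hr
  have hE : 0 < C₁ + C₀ * Real.sqrt (u r) := hepos r hr
  set S := Real.sqrt (u r) with hSdef
  have hS0 : 0 < S := Real.sqrt_pos.mpr hU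
  have hS2 : S ^ 2 = u r := Real.sq_sqrt hU.le
  set u' : ℝ := s * (2 * r / l ^ 2) * (1 - β) with hu'def
  -- derivative of u
  have hud : HasDerivAt u u' r := by
    have h1 : HasDerivAt (fun x : ℝ => x ^ 2) (2 * r) r := by
      simpa using hasDerivAt_pow 2 r
    have h2 := (((h1.div_const (l ^ 2)).const_mul s).mul_const (1 - β)).const_add 1
    have hfun : (fun x : ℝ => 1 + s * (x ^ 2 / l ^ 2) * (1 - β)) = u := by
      funext x; rw [hu x]
    rw [hfun] at h2
    exact h2
  -- derivative of sqrt ∘ u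
  have hsd : HasDerivAt (fun x => Real.sqrt (u x)) (u' / (2 * S)) r :=
    hud.sqrt hU.ne'
  -- derivative of F
  have hFd : HasDerivAt F ((C₀ * (u' / (2 * S))) / (C₁ + C₀ * S)) r := by
    have h := ((hsd.const_mul C₀).const_add C₁).log hE.ne'
    have hfun : (fun x : ℝ => Real.log (C₁ + C₀ * Real.sqrt (u x))) = F := by
      funext x; rw [hF x]
    rwa [hfun] at h
  -- derivative of g
  have hgd : HasDerivAt g (-(1 / 2) * (u' / u r)) r := by
    have h := (hud.log hU.ne').const_mul (-(1 / 2) : ℝ)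
    have hfun : (fun x : ℝ => -(1 / 2) * Real.log (u x)) = g := by
      funext x; rw [hg x]
    rwa [hfun] at h
  rw [hFd.deriv, hgd.deriv, hF r, ← hSdef, Real.exp_neg, Real.exp_log hE]
  -- key sum identity
  have hsum : (C₀ * (u' / (2 * S))) / (C₁ + C₀ * S) + -(1 / 2) * (u' / u r)
      = -C₁ * u' / (2 * u r * (C₁ + C₀ * S)) := by
    rw [← hS2]
    field_simp
    ring
  rw [hsum]
  have hur : u r = 1 + s * (r ^ 2 / l ^ 2) * (1 - β) := hu r
  have key : r ^ 2 + s * l ^ 2 * (1 - u r) = r ^ 2 * β := by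
    rw [hur]
    field_simp
    linear_combination (-(r ^ 2 * (1 - β))) * hs2
  have h12 : C₁ * (12 * β * (1 - β)) = -s * κ * l ^ 2 * C := by
    rw [hC₁]; field_simp
  have hCc : -C₁ * s * (1 - β) * β = κ * l ^ 2 * C / 12 := by
    linear_combination (-s / 12) * h12 + (κ * l ^ 2 * C / 12) * hs2
  rw [key, hu'def]
  have main : (u r / r ^ 3) * (-C₁ * (s * (2 * r / l ^ 2) * (1 - β)) /
        (2 * u r * (C₁ + C₀ * S))) * (r ^ 2 * β)
      = (-C₁ * s * (1 - β) * β / l ^ 2) * (C₁ + C₀ * S)⁻¹ := by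
    field_simp
  rw [main]
  have : -C₁ * s * (1 - β) * β / l ^ 2 = κ / 12 * C := by
    rw [hCc]; field_simp
  rw [this]
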